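/- arXiv:0807.4503 — 2 statements merged into one kernel-verified Lean document; each statement's English description precedes it below -/
import Mathlib

section
/- For every point ξ in the unit disk with ξ ≠ 0, the function z ↦ log(1/(1−z·\bar{ξ}/|ξ|)) belongs to F_0 and has F_0-norm equal to 1. -/
open MeasureTheory Metric Set Complex

noncomputable section

/-- A complex Borel measure on the unit circle, given by its polar decomposition:
a finite nonnegative measure (the total variation) together with a unimodular density. -/
structure CircleMeasure where
  ν : Measure (Metric.sphere (0:ℂ) 1)
  finite : IsFiniteMeasure ν
  w : Metric.sphere (0:ℂ) 1 → ℂ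
  w_meas : Measurable w
  w_norm : ∀ ζ, ‖w ζ‖ = 1

/-- Integral of a function against a complex measure. -/
def CircleMeasure.integral (μ : CircleMeasure) (f : Metric.sphere (0:ℂ) 1 → ℂ) : ℂ :=
  ∫ ζ, f ζ * μ.w ζ ∂μ.ν

/-- Total variation norm of a complex measure. -/
def CircleMeasure.norm (μ : CircleMeasure) : ℝ := (μ.ν Set.univ).toReal

/-- `μ` represents `g` in `F₀`: `g z = g 0 + ∫_T log(1/(1 - conj ζ · z)) dμ(ζ)` on the disk. -/
def RepF0 (g : ℂ → ℂ) (μ : CircleMeasure) : Prop :=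
  ∀ z ∈ ball (0:ℂ) 1,
    g z = g 0 + μ.integral (fun ζ => Complex.log (1 / (1 - (starRingEnd ℂ) (ζ:ℂ) * z)))

/-- Membership in the space `F₀`. -/
def MemF0 (g : ℂ → ℂ) : Prop :=
  DifferentiableOn ℂ g (ball 0 1) ∧ ∃ μ : CircleMeasure, RepF0 g μ

/-- The `F₀` norm: infimum of total variations of representing measures. -/
def normF0 (g : ℂ → ℂ) : ℝ := sInf {c | ∃ μ : CircleMeasure, RepF0 g μ ∧ μ.norm = c}

/-- `f` is a multiplier of `F₀`. -/
def MemM0 (f : ℂ → ℂ) : Prop :=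
  DifferentiableOn ℂ f (ball 0 1) ∧ ∀ g, MemF0 g → MemF0 (fun z => f z * g z)

/-- The multiplier norm on `m₀`. -/
def normM0 (f : ℂ → ℂ) : ℝ :=
  sSup {c | ∃ g, MemF0 g ∧ normF0 g ≤ 1 ∧ normF0 (fun z => f z * g z) = c}

/-- The `H^∞` norm: supremum of `‖f‖` on the unit disk. -/
def normHinf (f : ℂ → ℂ) : ℝ := sSup {c | ∃ z ∈ ball (0:ℂ) 1, ‖f z‖ = c}

lemma norm_log_le (w : ℂ) : ‖Complex.log w‖ ≤ |Real.log ‖w‖| + Real.pi := by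
  rw [Complex.log]
  refine (norm_add_le _ _).trans ?_
  simp [Complex.norm_real]
  exact Complex.abs_arg_le_pi w

lemma lower_bound (ξ : ℂ) (hξ0 : ξ ≠ 0) (μ : CircleMeasure)
    (hμ : RepF0 (fun z => Complex.log (1 / (1 - z * (starRingEnd ℂ) ξ / (‖ξ‖ : ℂ)))) μ) :
    1 ≤ μ.norm := by
  haveI := μ.finite
  set N := μ.norm with hNdef
  have hN0 : 0 ≤ N := ENNReal.toReal_nonneg
  by_contra hN
  push_neg at hN
  set L : ℝ := max (Real.log 2) ((Real.pi + 1)/(1 - N)) with hLdef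
  have hlog2 : (0:ℝ) < Real.log 2 := Real.log_pos (by norm_num)
  have hL2 : Real.log 2 ≤ L := le_max_left _ _
  have hLpos : 0 < L := lt_of_lt_of_le hlog2 hL2
  set r : ℝ := 1 - Real.exp (-L) with hrdef
  have hexp : 0 < Real.exp (-L) := Real.exp_pos _
  have hexphalf : Real.exp (-L) ≤ 1/2 := by
    have h1 : Real.exp (-L) ≤ Real.exp (-Real.log 2) := Real.exp_le_exp.mpr (by linarith)
    have h2 : Real.exp (-Real.log 2) = 1/2 := by
      rw [Real.exp_neg, Real.exp_log (by norm_num : (0:ℝ) < 2)]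
      norm_num
    linarith
  have hr1 : r < 1 := by simp [hrdef]; linarith
  have hrhalf : (1/2 : ℝ) ≤ r := by simp [hrdef]; linarith
  have hr0 : 0 ≤ r := by linarith
  have h1r : 1 - r = Real.exp (-L) := by simp [hrdef]
  have h1rpos : 0 < 1 - r := by rw [h1r]; exact hexp
  -- log(1/(1-r)) = L
  have hlogr : Real.log (1/(1-r)) = L := by
    rw [one_div, Real.log_inv, h1r, Real.log_exp, neg_neg]
  -- algebraic facts about a = ‖ξ‖
  set a : ℂ := (‖ξ‖:ℂ) with ha
  have h2 : a ≠ 0 := by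
    rw [ha]; simpa [Complex.ofReal_eq_zero, norm_eq_zero] using hξ0
  have h1 : ξ * (starRingEnd ℂ) ξ = a * a := by
    rw [Complex.mul_conj, ha]
    norm_cast
    rw [Complex.normSq_eq_norm_sq, sq]
  set z : ℂ := (r:ℂ) * (ξ/a) with hz
  have hznorm : ‖z‖ = r := by
    rw [hz, ha, norm_mul, norm_div, Complex.norm_real, Complex.norm_real,
      Real.norm_eq_abs, Real.norm_eq_abs, _root_.abs_of_nonneg hr0,
      _root_.abs_of_nonneg (norm_nonneg _), div_self (norm_ne_zero_iff.mpr hξ0), mul_one]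
  have hzball : z ∈ ball (0:ℂ) 1 := by
    rw [mem_ball_zero_iff, hznorm]; exact hr1
  -- evaluate g z
  have hzc : z * (starRingEnd ℂ) ξ / a = (r:ℂ) := by
    have e : (r:ℂ) * (ξ/a) * (starRingEnd ℂ) ξ / a = (r:ℂ) * (ξ * (starRingEnd ℂ) ξ) / (a*a) := by
      field_simp
    rw [hz, e, h1, mul_div_assoc, div_self (mul_ne_zero h2 h2), mul_one]
  have hgz : Complex.log (1 / (1 - z * (starRingEnd ℂ) ξ / a)) = ((L:ℝ):ℂ) := by
    rw [hzc]
    have : (1:ℂ) - (r:ℂ) = ((1 - r : ℝ):ℂ) := by push_cast; ring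
    rw [this, ← Complex.ofReal_one, ← Complex.ofReal_div, ← Complex.ofReal_log (by positivity),
      hlogr]
  have hg0 : Complex.log (1 / (1 - 0 * (starRingEnd ℂ) ξ / a)) = 0 := by
    simp
  have hrep := hμ z hzball
  simp only at hrep
  rw [hgz, hg0, zero_add] at hrep
  -- bound the integral
  have hbound : ‖μ.integral (fun ζ => Complex.log (1 / (1 - (starRingEnd ℂ) (ζ:ℂ) * z)))‖
      ≤ (L + Real.pi) * N := by
    rw [CircleMeasure.integral, hNdef, CircleMeasure.norm]
    apply norm_integral_le_of_norm_le_const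
    filter_upwards with ζ
    rw [norm_mul, μ.w_norm, mul_one]
    set d : ℂ := 1 - (starRingEnd ℂ) (ζ:ℂ) * z with hd
    have hζ : ‖((ζ:ℂ))‖ = 1 := by
      have := ζ.2
      rwa [mem_sphere_zero_iff_norm] at this
    have hcz : ‖(starRingEnd ℂ) (ζ:ℂ) * z‖ = r := by
      rw [norm_mul, RCLike.norm_conj, hζ, one_mul, hznorm]
    have hdlb : 1 - r ≤ ‖d‖ := by
      have := norm_sub_norm_le (1:ℂ) ((starRingEnd ℂ) (ζ:ℂ) * z)
      rw [hcz] at this; simpa [hd] using this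
    have hdub : ‖d‖ ≤ 2 := by
      have := norm_sub_le (1:ℂ) ((starRingEnd ℂ) (ζ:ℂ) * z)
      rw [hcz] at this; rw [hd]
      calc ‖(1:ℂ) - (starRingEnd ℂ) (ζ:ℂ) * z‖ ≤ 1 + r := by simpa using this
        _ ≤ 2 := by linarith
    have hdpos : 0 < ‖d‖ := by linarith
    refine (norm_log_le _).trans ?_
    have habs : ‖1/d‖ = 1/‖d‖ := by
      rw [norm_div, norm_one]
    have hkey : |Real.log ‖1/d‖| ≤ L := by
      rw [habs, one_div, Real.log_inv, abs_neg, abs_le]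
      constructor
      · have h2' : Real.log (1-r) ≤ Real.log ‖d‖ := Real.log_le_log h1rpos hdlb
        have h3' : Real.log (1-r) = -L := by rw [h1r, Real.log_exp]
        linarith
      · have : Real.log ‖d‖ ≤ Real.log 2 := Real.log_le_log hdpos hdub
        linarith
    linarith
  have hL_le : L ≤ (L + Real.pi) * N := by
    have : ‖((L:ℝ):ℂ)‖ = L := by
      rw [Complex.norm_real, Real.norm_eq_abs, _root_.abs_of_pos hLpos]
    calc L = ‖((L:ℝ):ℂ)‖ := this.symm
      _ = ‖μ.integral _‖ := by rw [hrep]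
      _ ≤ (L + Real.pi) * N := hbound
  -- contradiction
  have hLN : Real.pi + 1 ≤ L * (1 - N) := by
    have hpos : 0 < 1 - N := by linarith
    have := le_max_right (Real.log 2) ((Real.pi + 1)/(1 - N))
    calc Real.pi + 1 = ((Real.pi + 1)/(1 - N)) * (1 - N) := by field_simp
      _ ≤ L * (1 - N) := by
          apply mul_le_mul_of_nonneg_right this hpos.le
  have hπN : Real.pi * N ≤ Real.pi := mul_le_of_le_one_right Real.pi_pos.le hN.le
  nlinarith [Real.pi_pos]

/-- For every `ξ` in the unit disk with `ξ ≠ 0`, the function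
`z ↦ log(1/(1 - z · conj ξ / |ξ|))` belongs to `F₀` and has `F₀`-norm equal to `1`. -/
theorem stmt_3 (ξ : ℂ) (hξ : ξ ∈ ball (0:ℂ) 1) (hξ0 : ξ ≠ 0) :
    MemF0 (fun z => Complex.log (1 / (1 - z * (starRingEnd ℂ) ξ / (‖ξ‖ : ℂ)))) ∧
    normF0 (fun z => Complex.log (1 / (1 - z * (starRingEnd ℂ) ξ / (‖ξ‖ : ℂ)))) = 1 := by
  set g : ℂ → ℂ := fun z => Complex.log (1 / (1 - z * (starRingEnd ℂ) ξ / (‖ξ‖ : ℂ))) with hg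
  have hηmem : ξ/(‖ξ‖:ℂ) ∈ Metric.sphere (0:ℂ) 1 := by
    have h : ‖ξ‖ ≠ 0 := norm_ne_zero_iff.mpr hξ0
    rw [mem_sphere_zero_iff_norm, norm_div, Complex.norm_real,
      Real.norm_eq_abs, _root_.abs_of_nonneg (norm_nonneg _), div_self h]
  set η : Metric.sphere (0:ℂ) 1 := ⟨ξ/(‖ξ‖:ℂ), hηmem⟩ with hη
  set μ₀ : CircleMeasure :=
    { ν := Measure.dirac η
      finite := by infer_instance
      w := fun _ => 1
      w_meas := measurable_const
      w_norm := fun _ => norm_one } with hμ₀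
  have hcalc : ∀ z : ℂ, (starRingEnd ℂ) ((η:ℂ)) * z = z * (starRingEnd ℂ) ξ / (‖ξ‖:ℂ) := by
    intro z
    rw [hη]
    show (starRingEnd ℂ) (ξ/(‖ξ‖:ℂ)) * z = _
    rw [map_div₀, Complex.conj_ofReal]
    ring
  have hrep : RepF0 g μ₀ := by
    intro z hz
    have hint : μ₀.integral (fun ζ => Complex.log (1 / (1 - (starRingEnd ℂ) (ζ:ℂ) * z)))
        = Complex.log (1 / (1 - (starRingEnd ℂ) ((η:ℂ)) * z)) := by
      rw [hμ₀, CircleMeasure.integral]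
      simp only [mul_one]
      exact integral_dirac _ η
    rw [hint, hcalc]
    simp [hg]
  have hnorm₀ : μ₀.norm = 1 := by
    rw [hμ₀, CircleMeasure.norm]
    simp
  have hmem : MemF0 g := by
    constructor
    · -- differentiability
      set c : ℂ := (starRingEnd ℂ) ξ / (‖ξ‖:ℂ) with hc
      have hcnorm : ‖c‖ = 1 := by
        rw [hc, norm_div, RCLike.norm_conj, Complex.norm_real, Real.norm_eq_abs,
          _root_.abs_of_nonneg (norm_nonneg _), div_self (norm_ne_zero_iff.mpr hξ0)]
      intro z hz
      have hz1 : ‖z * c‖ < 1 := by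
        rw [norm_mul, hcnorm, mul_one]; simpa using hz
      have hne : (1 : ℂ) - z * c ≠ 0 := by
        intro h
        have : (1:ℂ) = z * c := by linear_combination h
        rw [← this] at hz1; simp at hz1
      have hre : 0 < ((1:ℂ) - z * c).re := by
        have : (z*c).re ≤ ‖z*c‖ := Complex.re_le_norm _
        simp only [Complex.sub_re, Complex.one_re]
        linarith
      have hd : DifferentiableAt ℂ (fun z => 1 / (1 - z * c)) z := by
        apply DifferentiableAt.div
        · exact differentiableAt_const _
        · fun_prop
        · exact hne
      have hslit : (1 / ((1:ℂ) - z * c)) ∈ Complex.slitPlane := by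
        rw [Complex.mem_slitPlane_iff]
        left
        rw [one_div, Complex.inv_re]
        exact div_pos hre (Complex.normSq_pos.mpr hne)
      have := (hd.clog hslit).differentiableWithinAt (s := ball 0 1)
      apply this.congr
      · intro w _; rw [hg]; simp only
        rw [hc, mul_div_assoc]
      · rw [hg]; simp only
        rw [hc, mul_div_assoc]
    · exact ⟨μ₀, hrep⟩
  refine ⟨hmem, ?_⟩
  have hub : ∀ x ∈ {c | ∃ μ : CircleMeasure, RepF0 g μ ∧ μ.norm = c}, 1 ≤ x := by
    rintro x ⟨μ, hμ, rfl⟩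
    exact lower_bound ξ hξ0 μ hμ
  apply le_antisymm
  · exact csInf_le ⟨1, hub⟩ ⟨μ₀, hrep, hnorm₀⟩
  · exact le_csInf ⟨1, μ₀, hrep, hnorm₀⟩ hub
end
end

section
/- If f is an analytic function on the unit disk satisfying sup_{z ∈ D} |f'(z)|(1−|z|)log(1/(1−|z|)) < ∞ and f ∈ H^∞, then f is a multiplier of the Bloch space B. -/
open MeasureTheory Metric Set Complex

noncomputable section

/-- Growth estimate for Bloch functions. -/
lemma bloch_growth {g : ℂ → ℂ} (hg : DifferentiableOn ℂ g (ball 0 1)) {C : ℝ}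
    (hC : ∀ w ∈ ball (0:ℂ) 1, ‖deriv g w‖ * (1 - ‖w‖ ^ 2) ≤ C)
    {z : ℂ} (hz : z ∈ ball (0:ℂ) 1) :
    ‖g z - g 0‖ ≤ C * Real.log (1 / (1 - ‖z‖)) := by
  have hr : ‖z‖ < 1 := mem_ball_zero_iff.mp hz
  have hr0 : (0:ℝ) ≤ ‖z‖ := norm_nonneg z
  set r := ‖z‖ with hrdef
  have hC0 : 0 ≤ C := by
    have h := hC 0 (by simp)
    simp only [norm_zero] at h
    nlinarith [norm_nonneg (deriv g 0)]
  -- the path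
  set φ : ℝ → ℂ := fun t => g (t • z) - g 0 with hφdef
  set φ' : ℝ → ℂ := fun t => z • deriv g (t • z) with hφ'def
  have hmem : ∀ t ∈ Icc (0:ℝ) 1, t • z ∈ ball (0:ℂ) 1 := by
    intro t ht
    rw [mem_ball_zero_iff, norm_smul, Real.norm_eq_abs, _root_.abs_of_nonneg ht.1]
    calc t * r ≤ 1 * r := by nlinarith [ht.2]
      _ < 1 := by simpa using hr
  have hder : ∀ t ∈ Icc (0:ℝ) 1, HasDerivAt φ (φ' t) t := by
    intro t ht
    have h1 : HasDerivAt (fun s : ℝ => s • z) z t := by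
      simpa using (hasDerivAt_id t).smul_const z
    have h2 : HasDerivAt g (deriv g (t • z)) (t • z) :=
      (hg.differentiableAt (isOpen_ball.mem_nhds (hmem t ht))).hasDerivAt
    simpa [φ, φ', Function.comp] using (HasDerivAt.scomp t h2 h1).sub_const (g 0)
  set B : ℝ → ℝ := fun t => -(C * Real.log (1 - t * r)) with hBdef
  set B' : ℝ → ℝ := fun t => C * (r / (1 - t * r)) with hB'def
  have hBpos : ∀ t ∈ Icc (0:ℝ) 1, 0 < 1 - t * r := by
    intro t ht; nlinarith [ht.1, ht.2]
  have hBder : ∀ t ∈ Icc (0:ℝ) 1, HasDerivAt B (B' t) t := by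
    intro t ht
    have h1 : HasDerivAt (fun s : ℝ => 1 - s * r) (-r) t := by
      simpa using ((hasDerivAt_id t).mul_const r).const_sub 1
    have h2 := (Real.hasDerivAt_log (ne_of_gt (hBpos t ht))).comp t h1
    have h3 := (h2.const_mul C).neg
    replace h3 : HasDerivAt B (-(C * ((1 - t * r)⁻¹ * -r))) t := h3
    convert h3 using 1
    simp only [B']
    field_simp
  have bound : ∀ t ∈ Ico (0:ℝ) 1, ‖φ' t‖ ≤ B' t := by
    intro t ht
    have ht' : t ∈ Icc (0:ℝ) 1 := ⟨ht.1, le_of_lt ht.2⟩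
    have hpos := hBpos t ht'
    have hnorm : ‖t • z‖ = t * r := by
      rw [norm_smul, Real.norm_eq_abs, _root_.abs_of_nonneg ht.1]
    have hd := hC (t • z) (hmem t ht')
    rw [hnorm] at hd
    have hkey : ‖deriv g (t • z)‖ * (1 - t * r) ≤ C := by
      nlinarith [norm_nonneg (deriv g (t • z)), ht.1, hr0, mul_nonneg ht.1 hr0]
    have : ‖deriv g (t • z)‖ ≤ C / (1 - t * r) :=
      (le_div_iff₀ hpos).mpr hkey
    calc ‖φ' t‖ = r * ‖deriv g (t • z)‖ := by
          simp only [φ']; rw [norm_smul]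
      _ ≤ r * (C / (1 - t * r)) := by
          exact mul_le_mul_of_nonneg_left this hr0
      _ = B' t := by simp only [B']; ring
  have hcont : ContinuousOn φ (Icc 0 1) := fun t ht =>
    (hder t ht).continuousAt.continuousWithinAt
  have hBcont : ContinuousOn B (Icc 0 1) := fun t ht =>
    (hBder t ht).continuousAt.continuousWithinAt
  have ha : ‖φ 0‖ ≤ B 0 := by simp [φ, B]
  have main := image_norm_le_of_norm_deriv_right_le_deriv_boundary' hcont
    (fun t ht => (hder t ⟨ht.1, le_of_lt ht.2⟩).hasDerivWithinAt) ha hBcont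
    (fun t ht => (hBder t ⟨ht.1, le_of_lt ht.2⟩).hasDerivWithinAt) bound
    (right_mem_Icc.mpr zero_le_one)
  have h1r : (0:ℝ) < 1 - r := by linarith
  have : φ 1 = g z - g 0 := by simp [φ]
  rw [this] at main
  calc ‖g z - g 0‖ ≤ B 1 := main
    _ = C * Real.log (1 / (1 - r)) := by
        simp [B, one_div, Real.log_inv]

/-- Cauchy-type estimate for bounded analytic functions. -/
lemma cauchy_est {f : ℂ → ℂ} (hf : DifferentiableOn ℂ f (ball 0 1)) {Cf : ℝ}
    (hCf : ∀ w ∈ ball (0:ℂ) 1, ‖f w‖ ≤ Cf) {z : ℂ} (hz : z ∈ ball (0:ℂ) 1) :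
    ‖deriv f z‖ * (1 - ‖z‖) ≤ 2 * Cf + 1 := by
  have hr : ‖z‖ < 1 := mem_ball_zero_iff.mp hz
  have hR : (0:ℝ) < 1 - ‖z‖ := by linarith
  have hCf0 : 0 ≤ Cf := le_trans (norm_nonneg _) (hCf 0 (by simp))
  have hsub : ball z (1 - ‖z‖) ⊆ ball (0:ℂ) 1 := by
    apply ball_subset_ball'
    simp [dist_eq_norm]
  have hmaps : MapsTo f (ball z (1 - ‖z‖)) (ball (f z) (2 * Cf + 1)) := by
    intro w hw
    rw [mem_ball, dist_eq_norm]
    calc ‖f w - f z‖ ≤ ‖f w‖ + ‖f z‖ := norm_sub_le _ _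
      _ ≤ Cf + Cf := add_le_add (hCf w (hsub hw)) (hCf z hz)
      _ < 2 * Cf + 1 := by linarith
  have := Complex.norm_deriv_le_div_of_mapsTo_ball (hf.mono hsub) (hmaps.mono_right ball_subset_closedBall) hR
  calc ‖deriv f z‖ * (1 - ‖z‖) ≤ ((2 * Cf + 1) / (1 - ‖z‖)) * (1 - ‖z‖) :=
        mul_le_mul_of_nonneg_right this (le_of_lt hR)
    _ = 2 * Cf + 1 := div_mul_cancel₀ _ (ne_of_gt hR)

private theorem stmt_11' (f : ℂ → ℂ) (hf : DifferentiableOn ℂ f (ball 0 1))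
    (hlog : ∃ C : ℝ, ∀ z ∈ ball (0:ℂ) 1,
      ‖deriv f z‖ * (1 - ‖z‖) * Real.log (1 / (1 - ‖z‖)) ≤ C)
    (hbdd : ∃ C : ℝ, ∀ z ∈ ball (0:ℂ) 1, ‖f z‖ ≤ C) :
    ∀ g, (DifferentiableOn ℂ g (ball 0 1) ∧
    ∃ C : ℝ, ∀ z ∈ ball (0:ℂ) 1, ‖deriv g z‖ * (1 - ‖z‖ ^ 2) ≤ C) →
    (DifferentiableOn ℂ (fun z => f z * g z) (ball 0 1) ∧
    ∃ C : ℝ, ∀ z ∈ ball (0:ℂ) 1, ‖deriv (fun z => f z * g z) z‖ * (1 - ‖z‖ ^ 2) ≤ C) := by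
  obtain ⟨Cl, hCl⟩ := hlog
  obtain ⟨Cf, hCf⟩ := hbdd
  rintro g ⟨hgd, Cg, hCg⟩
  have hCf0 : 0 ≤ Cf := le_trans (norm_nonneg _) (hCf 0 (by simp))
  have hCg0 : 0 ≤ Cg := by
    have h := hCg 0 (by simp)
    simp only [norm_zero] at h
    nlinarith [norm_nonneg (deriv g 0)]
  have hCl0 : 0 ≤ Cl := by
    have h := hCl 0 (by simp)
    simpa using h
  refine ⟨hf.mul hgd, Cf * Cg + 2 * (2 * Cf + 1) * ‖g 0‖ + 2 * Cg * Cl, ?_⟩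
  intro z hz
  have hr : ‖z‖ < 1 := mem_ball_zero_iff.mp hz
  have hr0 : (0:ℝ) ≤ ‖z‖ := norm_nonneg z
  have h1r : (0:ℝ) < 1 - ‖z‖ := by linarith
  have hr2 : (0:ℝ) ≤ 1 - ‖z‖ ^ 2 := by nlinarith
  have hnz : z ∈ ball (0:ℂ) 1 := hz
  have hfz : DifferentiableAt ℂ f z := hf.differentiableAt (isOpen_ball.mem_nhds hnz)
  have hgz : DifferentiableAt ℂ g z := hgd.differentiableAt (isOpen_ball.mem_nhds hnz)
  have hdm : deriv (fun w => f w * g w) z = deriv f z * g z + f z * deriv g z :=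
    deriv_mul hfz hgz
  set a := ‖deriv f z‖
  set b := ‖g z‖
  set c := ‖f z‖
  set d := ‖deriv g z‖
  set L := Real.log (1 / (1 - ‖z‖)) with hLdef
  have hL0 : 0 ≤ L := by
    apply Real.log_nonneg
    rw [le_div_iff₀ h1r]
    linarith
  have h1 : a * (1 - ‖z‖) * L ≤ Cl := hCl z hnz
  have h2 : c ≤ Cf := hCf z hnz
  have h3 : d * (1 - ‖z‖ ^ 2) ≤ Cg := hCg z hnz
  have h5 : a * (1 - ‖z‖) ≤ 2 * Cf + 1 := cauchy_est hf hCf hnz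
  have h4 : b ≤ ‖g 0‖ + Cg * L := by
    calc b ≤ ‖g 0‖ + ‖g z - g 0‖ := by
          have := norm_sub_le (g z - g 0) (-(g 0))
          simp only [sub_neg_eq_add, sub_add_cancel] at this
          simpa [add_comm] using norm_add_le (g 0) (g z - g 0) |>.trans_eq' (by ring_nf; rfl)
      _ ≤ ‖g 0‖ + Cg * L := by
          have := bloch_growth hgd hCg hnz
          linarith
  have ha0 : 0 ≤ a := norm_nonneg _
  have hb0 : 0 ≤ b := norm_nonneg _
  have hc0 : 0 ≤ c := norm_nonneg _
  have hd0 : 0 ≤ d := norm_nonneg _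
  have hg00 : 0 ≤ ‖g 0‖ := norm_nonneg _
  have hnorm : ‖deriv (fun w => f w * g w) z‖ ≤ a * b + c * d := by
    rw [hdm]
    calc ‖deriv f z * g z + f z * deriv g z‖
        ≤ ‖deriv f z * g z‖ + ‖f z * deriv g z‖ := norm_add_le _ _
      _ = a * b + c * d := by rw [norm_mul, norm_mul]
  have key1 : c * d * (1 - ‖z‖ ^ 2) ≤ Cf * Cg := by
    calc c * d * (1 - ‖z‖ ^ 2) = c * (d * (1 - ‖z‖ ^ 2)) := by ring
      _ ≤ Cf * Cg := mul_le_mul h2 h3 (by positivity) hCf0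
  have htwo : 1 - ‖z‖ ^ 2 ≤ 2 * (1 - ‖z‖) := by nlinarith
  have key2 : a * b * (1 - ‖z‖ ^ 2) ≤ 2 * (2 * Cf + 1) * ‖g 0‖ + 2 * Cg * Cl := by
    calc a * b * (1 - ‖z‖ ^ 2)
        ≤ a * (‖g 0‖ + Cg * L) * (1 - ‖z‖ ^ 2) := by
          apply mul_le_mul_of_nonneg_right _ hr2
          exact mul_le_mul_of_nonneg_left h4 ha0
      _ ≤ a * (‖g 0‖ + Cg * L) * (2 * (1 - ‖z‖)) := by
          apply mul_le_mul_of_nonneg_left htwo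
          positivity
      _ = 2 * (a * (1 - ‖z‖)) * ‖g 0‖ + 2 * Cg * (a * (1 - ‖z‖) * L) := by ring
      _ ≤ 2 * (2 * Cf + 1) * ‖g 0‖ + 2 * Cg * Cl := by
          apply add_le_add
          · apply mul_le_mul_of_nonneg_right _ hg00
            linarith
          · exact mul_le_mul_of_nonneg_left h1 (by linarith)
  calc ‖deriv (fun w => f w * g w) z‖ * (1 - ‖z‖ ^ 2)
      ≤ (a * b + c * d) * (1 - ‖z‖ ^ 2) := mul_le_mul_of_nonneg_right hnorm hr2
    _ = a * b * (1 - ‖z‖ ^ 2) + c * d * (1 - ‖z‖ ^ 2) := by ring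
    _ ≤ Cf * Cg + 2 * (2 * Cf + 1) * ‖g 0‖ + 2 * Cg * Cl := by linarith


/-- Membership in the Bloch space: analytic on the disk with
`sup |g'(z)|(1-|z|²) < ∞`. -/
def MemBloch (g : ℂ → ℂ) : Prop :=
  DifferentiableOn ℂ g (ball 0 1) ∧
    ∃ C : ℝ, ∀ z ∈ ball (0:ℂ) 1, ‖deriv g z‖ * (1 - ‖z‖ ^ 2) ≤ C

/-- If `f` is analytic on the disk, bounded, and satisfies
`sup |f'(z)|(1-|z|)log(1/(1-|z|)) < ∞`, then `f` multiplies the Bloch space. -/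
theorem stmt_11 (f : ℂ → ℂ) (hf : DifferentiableOn ℂ f (ball 0 1))
    (hlog : ∃ C : ℝ, ∀ z ∈ ball (0:ℂ) 1,
      ‖deriv f z‖ * (1 - ‖z‖) * Real.log (1 / (1 - ‖z‖)) ≤ C)
    (hbdd : ∃ C : ℝ, ∀ z ∈ ball (0:ℂ) 1, ‖f z‖ ≤ C) :
    ∀ g, MemBloch g → MemBloch (fun z => f z * g z) := by
  exact fun g hg => stmt_11' f hf hlog hbdd g hg
end
end
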